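/- For every nonnegative rate vector λ = (λ_1,…,λ_k), every n ∈ ℕ₀, and every t ≥ 0, the GCP probability mass function satisfies the forward Kolmogorov equation d/dt p(λ; n, t) = −( Σ_{j=1}^{k} λ_j ) p(λ; n, t) + Σ_{j=1}^{k} λ_j p(λ; n−j, t), where p(λ; m, t) is taken to be 0 for m < 0, with initial conditions p(λ; 0, 0) = 1 and p(λ; n, 0) = 0 for n ≥ 1. -/

import Mathlib

open Finset

/-- The set `Ω(k, n)` of tuples `x : Fin k → ℕ` with `∑_{j=1}^k j * x_j = n`
(`j : Fin k` represents the jump size `j + 1`). -/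
def gcpOmega (k n : ℕ) : Finset (Fin k → ℕ) :=
  (Fintype.piFinset fun _ : Fin k => Finset.range (n + 1)).filter
    fun x => ∑ j : Fin k, (j.1 + 1) * x j = n

/-- The probability mass function of the generalized counting process with jump
rates `lam j` for jumps of size `j + 1`, evaluated at state `n` and time `t`. -/
noncomputable def gcpPMF (k : ℕ) (lam : Fin k → ℝ) (n : ℕ) (t : ℝ) : ℝ :=
  ∑ x ∈ gcpOmega k n,
    ∏ j : Fin k, (lam j * t) ^ (x j) / (Nat.factorial (x j)) * Real.exp (-(lam j * t))


lemma mem_gcpOmega {k n : ℕ} {x : Fin k → ℕ} :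
    x ∈ gcpOmega k n ↔ ∑ j : Fin k, (j.1 + 1) * x j = n := by
  constructor
  · exact fun h => (Finset.mem_filter.mp h).2
  · intro h
    refine Finset.mem_filter.mpr ⟨?_, h⟩
    refine Fintype.mem_piFinset.mpr fun j => Finset.mem_range.mpr ?_
    have h1 : x j ≤ (j.1 + 1) * x j := Nat.le_mul_of_pos_left _ (Nat.succ_pos _)
    have h2 : (j.1 + 1) * x j ≤ n := h ▸
      Finset.single_le_sum (f := fun i : Fin k => (i.1 + 1) * x i) (fun _ _ => Nat.zero_le _)
        (Finset.mem_univ j)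
    omega

lemma gcpPMF_eq (k : ℕ) (lam : Fin k → ℝ) (n : ℕ) (t : ℝ) :
    gcpPMF k lam n t = ∑ x ∈ gcpOmega k n,
      (∏ j : Fin k, lam j ^ x j / (x j).factorial) * t ^ (∑ j, x j)
        * Real.exp (-(∑ j, lam j) * t) := by
  unfold gcpPMF
  refine Finset.sum_congr rfl fun x _ => ?_
  rw [Finset.prod_mul_distrib]
  congr 1
  · rw [← Finset.prod_pow_eq_pow_sum, ← Finset.prod_mul_distrib]
    refine Finset.prod_congr rfl fun j _ => ?_
    rw [mul_pow]; ring
  · rw [← Real.exp_sum]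
    congr 1
    simp [Finset.sum_neg_distrib, Finset.sum_mul]

lemma hasDerivAt_term (c L : ℝ) (N : ℕ) (t : ℝ) :
    HasDerivAt (fun s => c * s ^ N * Real.exp (-L * s))
      (c * (N * t ^ (N - 1)) * Real.exp (-L * t)
        - L * (c * t ^ N * Real.exp (-L * t))) t := by
  have h1 : HasDerivAt (fun s : ℝ => c * s ^ N) (c * (N * t ^ (N - 1))) t :=
    (hasDerivAt_pow N t).const_mul c
  have h2 : HasDerivAt (fun s : ℝ => Real.exp (-L * s)) (-L * Real.exp (-L * t)) t := by
    have h := ((hasDerivAt_id t).const_mul (-L)).exp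
    convert h using 1 <;> simp <;> ring
  have := h1.fun_mul h2
  exact this.congr_deriv (by ring)

lemma key (k : ℕ) (lam : Fin k → ℝ) (n : ℕ) (t : ℝ) :
    ∑ x ∈ gcpOmega k n,
      (∏ j : Fin k, lam j ^ x j / (x j).factorial) *
        (((∑ j, x j : ℕ) : ℝ) * t ^ ((∑ j, x j) - 1))
    = ∑ j : Fin k, lam j * (if j.1 + 1 ≤ n then
        ∑ y ∈ gcpOmega k (n - (j.1 + 1)),
          (∏ i : Fin k, lam i ^ y i / (y i).factorial) * t ^ (∑ i, y i)
      else 0) := by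
  have lhs_eq : ∀ x : Fin k → ℕ,
      (∏ j : Fin k, lam j ^ x j / (x j).factorial) *
        (((∑ j, x j : ℕ) : ℝ) * t ^ ((∑ j, x j) - 1))
      = ∑ j : Fin k, (∏ i : Fin k, lam i ^ x i / (x i).factorial) *
          ((x j : ℝ) * t ^ ((∑ i, x i) - 1)) := by
    intro x
    rw [Nat.cast_sum, Finset.sum_mul, Finset.mul_sum]
  simp_rw [lhs_eq]
  rw [Finset.sum_comm]
  refine Finset.sum_congr rfl fun j _ => ?_
  by_cases hjn : j.1 + 1 ≤ n
  · rw [if_pos hjn]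
    have hupd : ∀ (z : Fin k → ℕ) (b : ℕ),
        ∑ i : Fin k, (i.1 + 1) * Function.update z j b i
          = (j.1 + 1) * b + ∑ i ∈ Finset.univ.erase j, (i.1 + 1) * z i := by
      intro z b
      rw [← Finset.add_sum_erase _ (fun i : Fin k => (i.1 + 1) * Function.update z j b i)
        (Finset.mem_univ j)]
      simp only [Function.update_self]
      congr 1
      refine Finset.sum_congr rfl fun i hi => ?_
      rw [Function.update_of_ne (Finset.ne_of_mem_erase hi)]
    have hsplit : ∀ z : Fin k → ℕ, ∑ i : Fin k, (i.1 + 1) * z i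
        = (j.1 + 1) * z j + ∑ i ∈ Finset.univ.erase j, (i.1 + 1) * z i :=
      fun z => (Finset.add_sum_erase _ (fun i : Fin k => (i.1 + 1) * z i)
        (Finset.mem_univ j)).symm
    have hupd0 : ∀ (z : Fin k → ℕ) (b : ℕ),
        ∑ i : Fin k, Function.update z j b i = b + ∑ i ∈ Finset.univ.erase j, z i := by
      intro z b
      rw [← Finset.add_sum_erase _ (fun i : Fin k => Function.update z j b i)
        (Finset.mem_univ j)]
      simp only [Function.update_self]
      congr 1
      refine Finset.sum_congr rfl fun i hi => ?_
      rw [Function.update_of_ne (Finset.ne_of_mem_erase hi)]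
    have hsplit0 : ∀ z : Fin k → ℕ, ∑ i : Fin k, z i = z j + ∑ i ∈ Finset.univ.erase j, z i :=
      fun z => (Finset.add_sum_erase _ (fun i : Fin k => z i) (Finset.mem_univ j)).symm
    -- restrict to x j ≠ 0
    rw [← Finset.sum_filter_of_ne (p := fun x : Fin k → ℕ => x j ≠ 0)
      (by intro x hx hne hxj; exact hne (by simp [hxj]))]
    rw [Finset.mul_sum]
    refine Finset.sum_nbij' (i := fun x => Function.update x j (x j - 1))
      (j := fun y => Function.update y j (y j + 1)) ?_ ?_ ?_ ?_ ?_
    · intro x hx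
      obtain ⟨hxΩ, hxj⟩ := Finset.mem_filter.mp hx
      have hsum := mem_gcpOmega.mp hxΩ
      rw [hsplit x] at hsum
      refine mem_gcpOmega.mpr ?_
      rw [hupd]
      have hxj1 : 1 ≤ x j := Nat.one_le_iff_ne_zero.mpr hxj
      have : (j.1 + 1) * 1 ≤ (j.1 + 1) * x j := Nat.mul_le_mul_left _ hxj1
      rw [Nat.mul_sub_one]  -- maybe not needed; use omega-friendly form
      omega
    · intro y hy
      have hsum := mem_gcpOmega.mp hy
      rw [hsplit y] at hsum
      refine Finset.mem_filter.mpr ⟨mem_gcpOmega.mpr ?_, by simp⟩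
      rw [hupd]
      have h2 : (j.1 + 1) * (y j + 1) = (j.1 + 1) * y j + (j.1 + 1) := by ring
      omega
    · intro x hx
      obtain ⟨_, hxj⟩ := Finset.mem_filter.mp hx
      funext i
      rcases eq_or_ne i j with rfl | hij
      · simp only [Function.update_self]
        omega
      · simp only [Function.update_of_ne hij]
    · intro y hy
      funext i
      rcases eq_or_ne i j with rfl | hij
      · simp only [Function.update_self]
        omega
      · simp only [Function.update_of_ne hij]
    · intro x hx
      obtain ⟨hxΩ, hxj⟩ := Finset.mem_filter.mp hx
      obtain ⟨m, hm⟩ : ∃ m, x j = m + 1 := ⟨x j - 1, by omega⟩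
      have hxj1 : 1 ≤ x j := by omega
      have hsumx : (1:ℕ) ≤ ∑ i, x i :=
        le_trans hxj1 (Finset.single_le_sum (f := fun i => x i)
          (fun _ _ => Nat.zero_le _) (Finset.mem_univ j))
      have hNy : ∑ i, Function.update x j (x j - 1) i = (∑ i, x i) - 1 := by
        rw [hupd0, hsplit0 x]
        omega
      have hCy : ∏ i : Fin k, lam i ^ (Function.update x j (x j - 1) i) /
            ((Function.update x j (x j - 1) i)).factorial
          = (lam j ^ m / m.factorial) * ∏ i ∈ Finset.univ.erase j,
              lam i ^ x i / (x i).factorial := by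
        rw [← Finset.mul_prod_erase _
          (fun i : Fin k => lam i ^ (Function.update x j (x j - 1) i) /
            ((Function.update x j (x j - 1) i)).factorial) (Finset.mem_univ j)]
        simp only [Function.update_self, hm, Nat.add_sub_cancel]
        congr 1
        refine Finset.prod_congr rfl fun i hi => ?_
        rw [Function.update_of_ne (Finset.ne_of_mem_erase hi)]
      have hCx : ∏ i : Fin k, lam i ^ x i / (x i).factorial
          = (lam j ^ (m + 1) / (m + 1).factorial) * ∏ i ∈ Finset.univ.erase j,
              lam i ^ x i / (x i).factorial := by
        rw [← Finset.mul_prod_erase _ (fun i : Fin k => lam i ^ x i / (x i).factorial)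
          (Finset.mem_univ j), hm]
      rw [hCx, hCy, hNy, hm]
      have hfac : (((m + 1).factorial : ℕ) : ℝ) = ((m : ℝ) + 1) * m.factorial := by
        rw [Nat.factorial_succ]; push_cast; ring
      have hm0 : (m.factorial : ℝ) ≠ 0 := Nat.cast_ne_zero.mpr m.factorial_ne_zero
      have hkey : (lam j ^ (m + 1) / ((m + 1).factorial : ℝ)) * ((m : ℝ) + 1)
          = lam j * (lam j ^ m / m.factorial) := by
        rw [hfac, pow_succ]
        field_simp
      push_cast
      calc lam j ^ (m + 1) / ((m + 1).factorial : ℝ) *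
              (∏ i ∈ Finset.univ.erase j, lam i ^ x i / (x i).factorial) *
              (((m : ℝ) + 1) * t ^ ((∑ i, x i) - 1))
          = ((lam j ^ (m + 1) / ((m + 1).factorial : ℝ)) * ((m : ℝ) + 1)) *
              ((∏ i ∈ Finset.univ.erase j, lam i ^ x i / (x i).factorial) *
                t ^ ((∑ i, x i) - 1)) := by ring
        _ = _ := by rw [hkey]; ring
  · rw [if_neg hjn, mul_zero]
    refine Finset.sum_eq_zero fun x hx => ?_
    have hsum := mem_gcpOmega.mp hx
    have hle : (j.1 + 1) * x j ≤ n := hsum ▸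
      Finset.single_le_sum (f := fun i : Fin k => (i.1 + 1) * x i) (fun _ _ => Nat.zero_le _)
        (Finset.mem_univ j)
    have : x j = 0 := by
      by_contra h
      have : j.1 + 1 ≤ (j.1 + 1) * x j := Nat.le_mul_of_pos_right _ (by omega)
      omega
    simp [this]

/-- The GCP pmf satisfies the forward Kolmogorov system of differential equations
`p'(n,t) = −(Σ_j λ_j) p(n,t) + Σ_j λ_j p(n−j, t)` (terms with negative index vanish),
with initial conditions `p(0,0) = 1` and `p(n,0) = 0` for `n ≥ 1`. -/
theorem gcpPMF_kolmogorov_forward (k : ℕ) (hk : 1 ≤ k) (lam : Fin k → ℝ)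
    (hlam : ∀ j, 0 ≤ lam j) :
    (∀ (n : ℕ) (t : ℝ), 0 ≤ t →
      HasDerivAt (fun s => gcpPMF k lam n s)
        (-(∑ j : Fin k, lam j) * gcpPMF k lam n t
          + ∑ j : Fin k, lam j *
              (if j.1 + 1 ≤ n then gcpPMF k lam (n - (j.1 + 1)) t else 0)) t) ∧
    gcpPMF k lam 0 0 = 1 ∧ (∀ n : ℕ, 1 ≤ n → gcpPMF k lam n 0 = 0) := by
  refine ⟨fun n t _ => ?_, ?_, fun n hn => ?_⟩
  · set L := ∑ j : Fin k, lam j with hL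
    have hfun : (fun s => gcpPMF k lam n s)
        = fun s => ∑ x ∈ gcpOmega k n,
            (∏ j : Fin k, lam j ^ x j / (x j).factorial) * s ^ (∑ j, x j) *
              Real.exp (-L * s) := funext fun s => gcpPMF_eq k lam n s
    rw [hfun]
    have hD : HasDerivAt
        (fun s => ∑ x ∈ gcpOmega k n,
          (∏ j : Fin k, lam j ^ x j / (x j).factorial) * s ^ (∑ j, x j) *
            Real.exp (-L * s))
        (∑ x ∈ gcpOmega k n,
          ((∏ j : Fin k, lam j ^ x j / (x j).factorial) *
              (((∑ j, x j : ℕ) : ℝ) * t ^ ((∑ j, x j) - 1)) * Real.exp (-L * t)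
            - L * ((∏ j : Fin k, lam j ^ x j / (x j).factorial) * t ^ (∑ j, x j) *
                Real.exp (-L * t)))) t :=
      HasDerivAt.fun_sum fun x _ => hasDerivAt_term _ L _ t
    convert hD using 1
    rw [Finset.sum_sub_distrib, ← Finset.sum_mul, ← Finset.mul_sum, key, ← gcpPMF_eq]
    have hone : ∀ j : Fin k,
        lam j * (if j.1 + 1 ≤ n then gcpPMF k lam (n - (j.1 + 1)) t else 0)
        = (lam j * (if j.1 + 1 ≤ n then
            ∑ y ∈ gcpOmega k (n - (j.1 + 1)),
              (∏ i : Fin k, lam i ^ y i / (y i).factorial) * t ^ (∑ i, y i)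
          else 0)) * Real.exp (-L * t) := by
      intro j
      by_cases h : j.1 + 1 ≤ n
      · simp only [if_pos h]
        rw [gcpPMF_eq, ← Finset.sum_mul]
        ring
      · simp [h]
    calc -L * gcpPMF k lam n t
          + ∑ j : Fin k, lam j * (if j.1 + 1 ≤ n then gcpPMF k lam (n - (j.1 + 1)) t else 0)
        = -L * gcpPMF k lam n t
          + ∑ j : Fin k, (lam j * (if j.1 + 1 ≤ n then
              ∑ y ∈ gcpOmega k (n - (j.1 + 1)),
                (∏ i : Fin k, lam i ^ y i / (y i).factorial) * t ^ (∑ i, y i)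
            else 0)) * Real.exp (-L * t) := by
          rw [Finset.sum_congr rfl fun j _ => hone j]
      _ = (∑ j : Fin k, lam j * (if j.1 + 1 ≤ n then
              ∑ y ∈ gcpOmega k (n - (j.1 + 1)),
                (∏ i : Fin k, lam i ^ y i / (y i).factorial) * t ^ (∑ i, y i)
            else 0)) * Real.exp (-L * t) - L * gcpPMF k lam n t := by
          rw [← Finset.sum_mul]
          ring
  · have hΩ : gcpOmega k 0 = {fun _ => 0} := by
      ext x
      rw [mem_gcpOmega, Finset.mem_singleton]
      constructor
      · intro h
        funext j
        have hz : (j.1 + 1) * x j = 0 :=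
          (Finset.sum_eq_zero_iff.mp h) j (Finset.mem_univ j)
        exact (Nat.mul_eq_zero.mp hz).resolve_left (Nat.succ_ne_zero _)
      · rintro rfl
        simp
    unfold gcpPMF
    rw [hΩ]
    simp
  · unfold gcpPMF
    refine Finset.sum_eq_zero fun x hx => ?_
    have hsum := mem_gcpOmega.mp hx
    obtain ⟨j, hj⟩ : ∃ j : Fin k, x j ≠ 0 := by
      by_contra hall
      push_neg at hall
      simp only [hall, mul_zero, Finset.sum_const_zero] at hsum
      omega
    refine Finset.prod_eq_zero (Finset.mem_univ j) ?_
    rw [mul_zero, zero_pow hj]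
    simp
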